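/- Let r ≥ 1 be an integer and for j = 1, …, 4 and h ∈ ℝ set Z_j(h) = (1/2)·cos((r·h + 2π(j−1))/4) + (i/6)·sin(3·(r·h + 2π(j−1))/4). Then for all u ∈ ℂ and h ∈ ℝ, with w = e^{i·r·h} and w̄ = e^{−i·r·h}: 20736·∏_{j=1}^{4} (u − Z_j(h)) = 20736u⁴ − 576u²·(8 + 3(w − w̄)) + (92 − 39w − 231w̄ + 6w² + 30w̄² − w³ − w̄³). -/

import Mathlib

open Complex Real

lemma strand_val (A : ℝ) :
    ((((1 / 2 : ℝ) * Real.cos (A / 4) : ℝ) : ℂ) +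
      Complex.I / 6 * ((Real.sin (3 * A / 4) : ℝ) : ℂ)) =
    (Complex.exp ((A : ℂ) / 4 * I) + (Complex.exp ((A : ℂ) / 4 * I))⁻¹) / 4 +
      ((Complex.exp ((A : ℂ) / 4 * I)) ^ 3 - ((Complex.exp ((A : ℂ) / 4 * I))⁻¹) ^ 3) / 12 := by
  have hE : Complex.exp ((A : ℂ) / 4 * I) ≠ 0 := Complex.exp_ne_zero _
  rw [Complex.ofReal_mul, Complex.ofReal_cos, Complex.ofReal_sin, Complex.cos, Complex.sin]
  push_cast
  rw [show -((A : ℂ) / 4) * I = -((A : ℂ) / 4 * I) by ring, Complex.exp_neg]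
  rw [show (3 : ℂ) * A / 4 * I = ((3:ℕ):ℂ) * ((A : ℂ) / 4 * I) by norm_num; ring]
  rw [show -((3 : ℂ) * A / 4) * I = -(((3:ℕ):ℂ) * ((A : ℂ) / 4 * I)) by norm_num; ring]
  rw [Complex.exp_neg, Complex.exp_nat_mul, inv_pow]
  field_simp
  ring_nf
  rw [Complex.I_sq]
  ring

lemma split_exp (a b : ℝ) :
    Complex.exp (((a + b : ℝ) : ℂ) / 4 * I) =
      Complex.exp ((a : ℂ) / 4 * I) * Complex.exp ((b : ℂ) / 4 * I) := by
  rw [← Complex.exp_add]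
  push_cast
  ring_nf

set_option maxHeartbeats 1000000 in
theorem four_strand_three_lobe_braid_polynomial (r : ℕ) (hr : 1 ≤ r) (u : ℂ) (h : ℝ) :
    20736 * ∏ j ∈ Finset.Icc (1 : ℕ) 4,
        (u - ((((1 / 2 : ℝ) * Real.cos ((r * h + 2 * Real.pi * ((j : ℝ) - 1)) / 4) : ℝ) : ℂ) +
          Complex.I / 6 * ((Real.sin (3 * (r * h + 2 * Real.pi * ((j : ℝ) - 1)) / 4) : ℝ) : ℂ))) =
      20736 * u ^ 4
        - 576 * u ^ 2 * (8 + 3 * (Complex.exp (Complex.I * (r * h : ℝ))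
            - Complex.exp (-(Complex.I * (r * h : ℝ)))))
        + (92 - 39 * Complex.exp (Complex.I * (r * h : ℝ))
            - 231 * Complex.exp (-(Complex.I * (r * h : ℝ)))
            + 6 * Complex.exp (Complex.I * (r * h : ℝ)) ^ 2
            + 30 * Complex.exp (-(Complex.I * (r * h : ℝ))) ^ 2
            - Complex.exp (Complex.I * (r * h : ℝ)) ^ 3
            - Complex.exp (-(Complex.I * (r * h : ℝ))) ^ 3) := by
  rw [show Finset.Icc (1:ℕ) 4 = {1,2,3,4} by decide]
  rw [Finset.prod_insert (by decide), Finset.prod_insert (by decide),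
    Finset.prod_insert (by decide), Finset.prod_singleton]
  simp only [strand_val, split_exp]
  have cpi2 : Complex.exp (((Real.pi / 2 : ℝ) : ℂ) * I) = I := by
    rw [Complex.exp_mul_I, ← Complex.ofReal_cos, ← Complex.ofReal_sin]
    simp
  have c1 : Complex.exp (((2 * Real.pi * (((1:ℕ):ℝ) - 1) : ℝ) : ℂ) / 4 * I) = 1 := by
    rw [show (2 * Real.pi * (((1:ℕ):ℝ) - 1) : ℝ) = 0 by norm_num]
    simp
  have c2 : Complex.exp (((2 * Real.pi * (((2:ℕ):ℝ) - 1) : ℝ) : ℂ) / 4 * I) = I := by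
    rw [show (2 * Real.pi * (((2:ℕ):ℝ) - 1) : ℝ) = 2 * Real.pi by push_cast; ring]
    rw [show ((2 * Real.pi : ℝ) : ℂ) / 4 * I = ((Real.pi / 2 : ℝ) : ℂ) * I by push_cast; ring]
    exact cpi2
  have c3 : Complex.exp (((2 * Real.pi * (((3:ℕ):ℝ) - 1) : ℝ) : ℂ) / 4 * I) = -1 := by
    rw [show (2 * Real.pi * (((3:ℕ):ℝ) - 1) : ℝ) = 4 * Real.pi by push_cast; ring]
    rw [show ((4 * Real.pi : ℝ) : ℂ) / 4 * I = (Real.pi : ℂ) * I by push_cast; ring]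
    exact Complex.exp_pi_mul_I
  have c4 : Complex.exp (((2 * Real.pi * (((4:ℕ):ℝ) - 1) : ℝ) : ℂ) / 4 * I) = -I := by
    rw [show (2 * Real.pi * (((4:ℕ):ℝ) - 1) : ℝ) = 6 * Real.pi by push_cast; ring]
    rw [show ((6 * Real.pi : ℝ) : ℂ) / 4 * I = (Real.pi : ℂ) * I + ((Real.pi / 2 : ℝ) : ℂ) * I by
      push_cast; ring]
    rw [Complex.exp_add, Complex.exp_pi_mul_I, cpi2]
    ring
  have hx1 : Complex.exp (Complex.I * (((r : ℝ) * h : ℝ) : ℂ)) =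
      Complex.exp ((((r : ℝ) * h : ℝ) : ℂ) / 4 * I) ^ 4 := by
    rw [show Complex.I * (((r : ℝ) * h : ℝ) : ℂ) =
      ((4:ℕ):ℂ) * ((((r : ℝ) * h : ℝ) : ℂ) / 4 * I) by push_cast; ring, Complex.exp_nat_mul]
  have hx2 : Complex.exp (-(Complex.I * (((r : ℝ) * h : ℝ) : ℂ))) =
      (Complex.exp ((((r : ℝ) * h : ℝ) : ℂ) / 4 * I))⁻¹ ^ 4 := by
    rw [show -(Complex.I * (((r : ℝ) * h : ℝ) : ℂ)) =
      -(((4:ℕ):ℂ) * ((((r : ℝ) * h : ℝ) : ℂ) / 4 * I)) by push_cast; ring,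
      Complex.exp_neg, Complex.exp_nat_mul, inv_pow]
  rw [c1, c2, c3, c4, hx1, hx2]
  have he0 : Complex.exp ((((r : ℝ) * h : ℝ) : ℂ) / 4 * I) ≠ 0 := Complex.exp_ne_zero _
  set e := Complex.exp ((((r : ℝ) * h : ℝ) : ℂ) / 4 * I) with he
  simp only [mul_one, mul_inv, inv_neg, Complex.inv_I, inv_one, mul_neg, neg_neg, neg_mul]
  have hef : e * e⁻¹ = 1 := mul_inv_cancel₀ he0
  have hi : (Complex.I : ℂ) ^ 2 = -1 := Complex.I_sq
  linear_combination ((-2304 : ℂ) * u ^ 2 + (-126 : ℂ) * Complex.I ^ 2 + (2592 : ℂ) * Complex.I ^ 2 * u ^ 2 + (34 : ℂ) * Complex.I ^ 6 + (-288 : ℂ) * Complex.I ^ 6 * u ^ 2 + (864 : ℂ) * e⁻¹ ^ 2 * u ^ 2 + (36 : ℂ) * e⁻¹ ^ 2 * Complex.I ^ 2 + (48 : ℂ) * e⁻¹ ^ 2 * Complex.I ^ 4 + (-864 : ℂ) * e⁻¹ ^ 2 * Complex.I ^ 4 * u ^ 2 + (12 : ℂ) * e⁻¹ ^ 2 * Complex.I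 ^ 6 + (63 : ℂ) * e⁻¹ ^ 4 * Complex.I ^ 2 + (-84 : ℂ) * e⁻¹ ^ 4 * Complex.I ^ 4 + (3 : ℂ) * e⁻¹ ^ 4 * Complex.I ^ 6 + (-18 : ℂ) * e⁻¹ ^ 6 * Complex.I ^ 2 + (18 : ℂ) * e⁻¹ ^ 6 * Complex.I ^ 6 + (6 : ℂ) * e⁻¹ ^ 8 * Complex.I ^ 4 + (-6 : ℂ) * e⁻¹ ^ 8 * Complex.I ^ 6 + (288 : ℂ) * e * e⁻¹ * u ^ 2 + (-126 : ℂ) * e * e⁻¹ * Complex.I ^ 2 + (34 : ℂ) * e * e⁻¹ * Complex.I ^ 6 + (-288 : ℂ) * e * e⁻¹ * Complex.I ^ 6 * u ^ 2 + (36 : ℂ) * e * e⁻¹ ^ 3 * Complex.I ^ 2 + (48 : ℂ) * e * e⁻¹ ^ 3 * Complex.I ^ 4 + (12 : ℂ) * e * e⁻¹ ^ 3 * Complex.I ^ 6 + (9 : ℂ) * e * e⁻¹ ^ 5 * Complex.I ^ 2 + (-30 : ℂ) * e * e⁻¹ ^ 5 * Complex.I ^ 4 + (3 : ℂ) * e *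 e⁻¹ ^ 5 * Complex.I ^ 6 + (-864 : ℂ) * e ^ 2 * u ^ 2 + (-72 : ℂ) * e ^ 2 * Complex.I ^ 2 + (-48 : ℂ) * e ^ 2 * Complex.I ^ 4 + (864 : ℂ) * e ^ 2 * Complex.I ^ 4 * u ^ 2 + (24 : ℂ) * e ^ 2 * Complex.I ^ 6 + (288 : ℂ) * e ^ 2 * e⁻¹ ^ 2 * u ^ 2 + (36 : ℂ) * e ^ 2 * e⁻¹ ^ 2 * Complex.I ^ 2 + (34 : ℂ) * e ^ 2 * e⁻¹ ^ 2 * Complex.I ^ 6 + (-288 : ℂ) * e ^ 2 * e⁻¹ ^ 2 * Complex.I ^ 6 * u ^ 2 + (-18 : ℂ) * e ^ 2 * e⁻¹ ^ 4 * Complex.I ^ 2 + (-6 : ℂ) * e ^ 2 * e⁻¹ ^ 4 * Complex.I ^ 4 + (12 : ℂ) * e ^ 2 * e⁻¹ ^ 4 * Complex.I ^ 6 + (6 : ℂ) * e ^ 2 * e⁻¹ ^ 6 * Complex.I ^ 4 + (-6 : ℂ) * e ^ 2 * e⁻¹ ^ 6 * Complex.I ^ 6 + (-72 : ℂ) * e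 ^ 3 * e⁻¹ * Complex.I ^ 2 + (-48 : ℂ) * e ^ 3 * e⁻¹ * Complex.I ^ 4 + (24 : ℂ) * e ^ 3 * e⁻¹ * Complex.I ^ 6 + (36 : ℂ) * e ^ 3 * e⁻¹ ^ 3 * Complex.I ^ 2 + (34 : ℂ) * e ^ 3 * e⁻¹ ^ 3 * Complex.I ^ 6 + (-6 : ℂ) * e ^ 3 * e⁻¹ ^ 5 * Complex.I ^ 4 + (-6 : ℂ) * e ^ 3 * e⁻¹ ^ 5 * Complex.I ^ 6 + (-45 : ℂ) * e ^ 4 * Complex.I ^ 2 + (12 : ℂ) * e ^ 4 * Complex.I ^ 4 + (15 : ℂ) * e ^ 4 * Complex.I ^ 6 + (-18 : ℂ) * e ^ 4 * e⁻¹ ^ 2 * Complex.I ^ 2 + (6 : ℂ) * e ^ 4 * e⁻¹ ^ 2 * Complex.I ^ 4 + (24 : ℂ) * e ^ 4 * e⁻¹ ^ 2 * Complex.I ^ 6 + (-2 : ℂ) * e ^ 4 * e⁻¹ ^ 4 * Complex.I ^ 6 + (9 : ℂ) * e ^ 5 * e⁻¹ * Complex.I ^ 2 + (-42 : ℂ)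 * e ^ 5 * e⁻¹ * Complex.I ^ 4 + (15 : ℂ) * e ^ 5 * e⁻¹ * Complex.I ^ 6 + (6 : ℂ) * e ^ 5 * e⁻¹ ^ 3 * Complex.I ^ 4 + (6 : ℂ) * e ^ 5 * e⁻¹ ^ 3 * Complex.I ^ 6 + (-2 : ℂ) * e ^ 5 * e⁻¹ ^ 5 * Complex.I ^ 6 + (-18 : ℂ) * e ^ 6 * Complex.I ^ 2 + (18 : ℂ) * e ^ 6 * Complex.I ^ 6 + (-6 : ℂ) * e ^ 6 * e⁻¹ ^ 2 * Complex.I ^ 4 + (6 : ℂ) * e ^ 6 * e⁻¹ ^ 2 * Complex.I ^ 6 + (-6 : ℂ) * e ^ 8 * Complex.I ^ 4 + (6 : ℂ) * e ^ 8 * Complex.I ^ 6) * hef + ((-92 : ℂ) + (2304 : ℂ) * u ^ 2 + (-34 : ℂ) * Complex.I ^ 2 + (288 : ℂ) * Complex.I ^ 2 * u ^ 2 + (34 : ℂ) * Complex.I ^ 4 + (-288 : ℂ) * Complex.I ^ 4 * u ^ 2 + (-432 : ℂ) * e⁻¹ ^ 2 * u ^ 2 + (36 : ℂ) * e⁻¹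 ^ 2 * Complex.I ^ 2 + (-864 : ℂ) * e⁻¹ ^ 2 * Complex.I ^ 2 * u ^ 2 + (12 : ℂ) * e⁻¹ ^ 2 * Complex.I ^ 4 + (231 : ℂ) * e⁻¹ ^ 4 + (-864 : ℂ) * e⁻¹ ^ 4 * u ^ 2 + (-87 : ℂ) * e⁻¹ ^ 4 * Complex.I ^ 2 + (864 : ℂ) * e⁻¹ ^ 4 * Complex.I ^ 2 * u ^ 2 + (3 : ℂ) * e⁻¹ ^ 4 * Complex.I ^ 4 + (-144 : ℂ) * e⁻¹ ^ 6 * u ^ 2 + (-72 : ℂ) * e⁻¹ ^ 6 * Complex.I ^ 2 + (144 : ℂ) * e⁻¹ ^ 6 * Complex.I ^ 2 * u ^ 2 + (18 : ℂ) * e⁻¹ ^ 6 * Complex.I ^ 4 + (-144 : ℂ) * e⁻¹ ^ 6 * Complex.I ^ 4 * u ^ 2 + (-30 : ℂ) * e⁻¹ ^ 8 + (39 : ℂ) * e⁻¹ ^ 8 * Complex.I ^ 2 + (3 : ℂ) * e⁻¹ ^ 8 * Complex.I ^ 4 + (-6 : ℂ) * e⁻¹ ^ 10 * Complex.I ^ 4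 + (1 : ℂ) * e⁻¹ ^ 12 + (-1 : ℂ) * e⁻¹ ^ 12 * Complex.I ^ 2 + (1 : ℂ) * e⁻¹ ^ 12 * Complex.I ^ 4 + (-2160 : ℂ) * e ^ 2 * u ^ 2 + (-72 : ℂ) * e ^ 2 * Complex.I ^ 2 + (864 : ℂ) * e ^ 2 * Complex.I ^ 2 * u ^ 2 + (24 : ℂ) * e ^ 2 * Complex.I ^ 4 + (39 : ℂ) * e ^ 4 + (864 : ℂ) * e ^ 4 * u ^ 2 + (-3 : ℂ) * e ^ 4 * Complex.I ^ 2 + (-864 : ℂ) * e ^ 4 * Complex.I ^ 2 * u ^ 2 + (15 : ℂ) * e ^ 4 * Complex.I ^ 4 + (-144 : ℂ) * e ^ 6 * u ^ 2 + (36 : ℂ) * e ^ 6 * Complex.I ^ 2 + (144 : ℂ) * e ^ 6 * Complex.I ^ 2 * u ^ 2 + (18 : ℂ) * e ^ 6 * Complex.I ^ 4 + (-144 : ℂ) * e ^ 6 * Complex.I ^ 4 * u ^ 2 + (-6 : ℂ) * e ^ 8 + (15 : ℂ) * e ^ 8 * Complex.I ^ 2 + (15 : ℂ) * e ^ 8 *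 Complex.I ^ 4 + (6 : ℂ) * e ^ 10 * Complex.I ^ 4 + (1 : ℂ) * e ^ 12 + (-1 : ℂ) * e ^ 12 * Complex.I ^ 2 + (1 : ℂ) * e ^ 12 * Complex.I ^ 4) * hi
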